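/- Let p be an odd prime and G a finite p-group with |γ₂(G)| = p and exp(G) = p. Then either G is extra-special, or G = U × V where U ≤ Z(G) is elementary abelian and V is extra-special. -/

import Mathlib

open Subgroup Pointwise
open scoped commutatorElement

section Aux

variable {p : ℕ} [Fact p.Prime]

/-- A commutator of products with central elements. -/
lemma commutatorElement_mul_center {G : Type*} [Group G] (v w u u' : G)
    (hu : u ∈ Subgroup.center G) (hu' : u' ∈ Subgroup.center G) :
    ⁅v * u, w * u'⁆ = ⁅v, w⁆ := by
  have cu : ∀ x : G, Commute u x := fun x => (Subgroup.mem_center_iff.mp hu x).symm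
  have cu' : ∀ x : G, Commute u' x := fun x => (Subgroup.mem_center_iff.mp hu' x).symm
  have key : ∀ a b : G, ⁅a, b⁆ = a * b * (b * a)⁻¹ := by
    intro a b; rw [commutatorElement_def, mul_inv_rev, mul_assoc]
  rw [key, key v w, Commute.mul_mul_mul_comm (cu w) v u', Commute.mul_mul_mul_comm (cu' v) w u,
    (cu u').eq, mul_inv_rev, ← mul_assoc, mul_assoc (v * w), mul_inv_cancel, mul_one]

/-- If `z ^ p = 1` and `p ∤ k` then `z` is a power of `z ^ k`. -/
lemma mem_zpowers_zpow {G : Type*} [Group G] {z : G} (hz : z ^ p = 1) {k : ℤ}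
    (hk : ¬ (p : ℤ) ∣ k) : z ∈ Subgroup.zpowers (z ^ k) := by
  have hcop : IsCoprime (p : ℤ) k :=
    (Nat.prime_iff_prime_int.mp Fact.out).coprime_iff_not_dvd.mpr hk
  obtain ⟨a, b, hab⟩ := hcop
  refine ⟨b, ?_⟩
  have h1 : z ^ (a * (p : ℤ) + b * k) = z := by rw [hab, zpow_one]
  rw [zpow_add, mul_comm a (p : ℤ), zpow_mul, zpow_natCast, hz, one_zpow, one_mul,
    mul_comm b k, zpow_mul] at h1
  exact h1

end Aux

section Aux2

variable {p : ℕ} [Fact p.Prime]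

/-- A normal subgroup of order `p` in a finite `p`-group is central. -/
lemma normal_le_center_of_card_eq {G : Type*} [Group G] [Finite G] (hG : IsPGroup p G)
    {N : Subgroup G} [hN : N.Normal] (hNp : Nat.card N = p) : N ≤ Subgroup.center G := by
  have hp : p.Prime := Fact.out
  letI : MulAction G N := MulAction.compHom N (MulAut.conjNormal : G →* MulAut N)
  have hsmul : ∀ (g : G) (n : N), ((g • n : N) : G) = g * n * g⁻¹ := fun g n =>
    MulAut.conjNormal_apply g n
  have h1 : (1 : N) ∈ MulAction.fixedPoints G N := by
    intro g
    ext
    rw [hsmul]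
    simp
  obtain ⟨b, hb, hb1⟩ := hG.exists_fixed_point_of_prime_dvd_card_of_fixed_point (α := N)
    (by rw [hNp]) h1
  -- b is a nontrivial central element of N
  have hbZ : (b : G) ∈ N ⊓ Subgroup.center G := by
    refine ⟨b.2, Subgroup.mem_center_iff.mpr fun g => ?_⟩
    have := hb g
    have : g * b * g⁻¹ = (b : G) := by rw [← hsmul g b, this]
    calc g * (b : G) = g * b * g⁻¹ * g := by group
    _ = b * g := by rw [this]
  have hcard : Nat.card (N ⊓ Subgroup.center G : Subgroup G) = p := by
    have hdvd : Nat.card (N ⊓ Subgroup.center G : Subgroup G) ∣ p := by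
      rw [← hNp]; exact Subgroup.card_dvd_of_le inf_le_left
    rcases (Nat.Prime.eq_one_or_self_of_dvd hp _ hdvd) with h | h
    · exfalso
      have hbot : N ⊓ Subgroup.center G = ⊥ := by
        rw [← Subgroup.card_le_one_iff_eq_bot]; exact h.le
      rw [hbot] at hbZ
      have : (b : G) = 1 := hbZ
      exact hb1 (by ext; simp [this])
    · exact h
  have : N ⊓ Subgroup.center G = N :=
    Subgroup.eq_of_le_of_card_ge inf_le_left (by rw [hNp, hcard])
  rw [← this]
  exact inf_le_right

end Aux2

section Aux3

variable {p : ℕ} [Fact p.Prime]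

/-- In a finite commutative group of exponent dividing `p`, any nontrivial element is
avoided by some maximal subgroup. -/
lemma exists_coatom_avoid {A : Type*} [CommGroup A] [Finite A] (hxp : ∀ a : A, a ^ p = 1)
    {x : A} (hx : x ≠ 1) : ∃ M : Subgroup A, IsCoatom M ∧ x ∉ M := by
  obtain ⟨M, hMS, hMmax⟩ := Set.Finite.exists_maximalFor id {M : Subgroup A | x ∉ M}
    (Set.toFinite _) ⟨⊥, by simpa [Subgroup.mem_bot] using hx⟩
  simp only [id] at hMmax
  replace hMmax : ∀ M' ∈ {M : Subgroup A | x ∉ M}, M ≤ M' → M = M' :=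
    fun M' h1 h2 => le_antisymm h2 (hMmax h1 h2)
  refine ⟨M, ⟨fun h => hMS (h ▸ Subgroup.mem_top x), fun M' hMM' => ?_⟩, hMS⟩
  have hxM' : x ∈ M' := by
    by_contra h
    exact hMM'.ne (hMmax M' h hMM'.le)
  -- key : M ⊔ zpowers x = ⊤
  have key : M ⊔ Subgroup.zpowers x = ⊤ := by
    rw [eq_top_iff]
    intro g _
    by_cases hg : g ∈ M
    · exact Subgroup.mem_sup_left hg
    · have hxmem : x ∈ M ⊔ Subgroup.zpowers g := by
        by_contra hxg
        exact hg ((hMmax (M ⊔ Subgroup.zpowers g) hxg le_sup_left) ▸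
          Subgroup.mem_sup_right (Subgroup.mem_zpowers g))
      obtain ⟨m, hm, c, hc, hmc⟩ := Subgroup.mem_sup.mp hxmem
      obtain ⟨k, rfl⟩ := hc
      have hk : ¬ (p : ℤ) ∣ k := by
        rintro ⟨t, rfl⟩
        apply hMS
        have hgk : g ^ ((p : ℤ) * t) = 1 := by
          rw [zpow_mul, zpow_natCast, hxp, one_zpow]
        rw [← hmc]
        simpa [hgk] using hm
      have hgk : g ^ k = m⁻¹ * x := by rw [← hmc]; group
      have hle : Subgroup.zpowers (g ^ k) ≤ M ⊔ Subgroup.zpowers x := by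
        rw [Subgroup.zpowers_le, hgk]
        exact mul_mem (Subgroup.mem_sup_left (inv_mem hm))
          (Subgroup.mem_sup_right (Subgroup.mem_zpowers x))
      exact hle (mem_zpowers_zpow (hxp g) hk)
  exact top_unique (key ▸ sup_le hMM'.le (Subgroup.zpowers_le.mpr hxM'))

end Aux3

section Aux4

variable {p : ℕ} [Fact p.Prime]

/-- In a finite `p`-group, every maximal subgroup contains the commutator subgroup. -/
lemma commutator_le_coatom {G : Type*} [Group G] [Finite G] (hG : IsPGroup p G)
    {M : Subgroup G} (hM : IsCoatom M) : commutator G ≤ M := by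
  haveI : Group.IsNilpotent G := hG.isNilpotent
  haveI hMn : M.Normal := Subgroup.NormalizerCondition.normal_of_coatom (H := M) normalizerCondition_of_isNilpotent hM
  have hsurj := QuotientGroup.mk'_surjective M
  -- every subgroup of the quotient is ⊥ or ⊤
  have hsub : ∀ Kq : Subgroup (G ⧸ M), Kq = ⊥ ∨ Kq = ⊤ := by
    intro Kq
    have hle : M ≤ Kq.comap (QuotientGroup.mk' M) := by
      intro m hm
      have : QuotientGroup.mk' M m = 1 := by
        rw [QuotientGroup.mk'_apply, QuotientGroup.eq_one_iff]; exact hm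
      rw [Subgroup.mem_comap, this]; exact one_mem _
    rcases eq_or_lt_of_le hle with h | h
    · left
      have hmap := congrArg (Subgroup.map (QuotientGroup.mk' M)) h
      rw [Subgroup.map_comap_eq_self_of_surjective hsurj] at hmap
      rw [← hmap, Subgroup.map_eq_bot_iff, QuotientGroup.ker_mk']
    · right
      have := hM.2 _ h
      have hmap := congrArg (Subgroup.map (QuotientGroup.mk' M)) this
      rw [Subgroup.map_comap_eq_self_of_surjective hsurj,
        Subgroup.map_top_of_surjective _ hsurj] at hmap
      exact hmap
  -- the quotient is commutative
  have hcomm : ∀ a b : G ⧸ M, a * b = b * a := by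
    rcases subsingleton_or_nontrivial (G ⧸ M) with h | h
    · intro a b; exact Subsingleton.elim _ _
    · obtain ⟨q, hq⟩ := exists_ne (1 : G ⧸ M)
      have hzp : Subgroup.zpowers q = ⊤ := by
        rcases hsub (Subgroup.zpowers q) with h' | h'
        · exact absurd (h' ▸ Subgroup.mem_zpowers q) (by simpa [Subgroup.mem_bot] using hq)
        · exact h'
      haveI : IsCyclic (G ⧸ M) := ⟨⟨q, fun x => by
        have : x ∈ Subgroup.zpowers q := by rw [hzp]; trivial
        exact this⟩⟩
      letI := IsCyclic.commGroup (α := G ⧸ M)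
      exact mul_comm
  rw [_root_.commutator_def]
  refine Subgroup.commutator_le.mpr fun g₁ _ g₂ _ => ?_
  have : QuotientGroup.mk' M ⁅g₁, g₂⁆ = 1 := by
    rw [map_commutatorElement]
    exact commutatorElement_eq_one_iff_mul_comm.mpr (hcomm _ _)
  rw [QuotientGroup.mk'_apply, QuotientGroup.eq_one_iff] at this
  exact this

/-- For a finite `p`-group of exponent dividing `p`, the Frattini subgroup equals the
commutator subgroup. -/
lemma frattini_eq_commutator {G : Type*} [Group G] [Finite G] (hG : IsPGroup p G)
    (hxp : ∀ x : G, x ^ p = 1) : frattini G = commutator G := by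
  apply le_antisymm
  · intro x hx
    by_contra hxc
    have h1 : (Abelianization.of x : Abelianization G) ≠ 1 := by
      intro h
      exact hxc ((QuotientGroup.eq_one_iff x).mp h)
    have hsurj : Function.Surjective (Abelianization.of : G →* Abelianization G) := by
      intro a
      obtain ⟨y, hy⟩ := QuotientGroup.mk'_surjective (commutator G) a
      exact ⟨y, hy⟩
    have hexpA : ∀ a : Abelianization G, a ^ p = 1 := by
      intro a
      obtain ⟨y, rfl⟩ := hsurj a
      rw [← map_pow, hxp, map_one]
    obtain ⟨M, hM, hxM⟩ := exists_coatom_avoid (p := p) hexpA h1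
    have hco : IsCoatom (M.comap (Abelianization.of : G →* Abelianization G)) :=
      Subgroup.isCoatom_comap_of_surjective hsurj hM
    exact hxM (frattini_le_coatom hco hx)
  · refine le_iInf fun M => le_iInf fun hM => commutator_le_coatom hG hM
end Aux4

section Aux5

lemma normal_of_le_center' {G : Type*} [Group G] {H : Subgroup G}
    (h : H ≤ Subgroup.center G) : H.Normal := by
  refine ⟨fun n hn g => ?_⟩
  have hc := Subgroup.mem_center_iff.mp (h hn) g
  rwa [show g * n * g⁻¹ = n by rw [hc, mul_inv_cancel_right]]

lemma not_mem_frattini {G : Type*} [Group G] {x : G} (h : x ∉ frattini G) :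
    ∃ M : Subgroup G, IsCoatom M ∧ x ∉ M := by
  by_contra hc
  push_neg at hc
  apply h
  have hfr : frattini G = ⨅ M ∈ {H : Subgroup G | IsCoatom H}, M := rfl
  rw [hfr]
  refine Subgroup.mem_iInf.mpr fun M => Subgroup.mem_iInf.mpr fun hM => hc M hM

end Aux5



/-- A finite `p`-group is extra-special if its center, commutator subgroup and
Frattini subgroup coincide and have order `p`. -/
def IsExtraspecial (p : ℕ) (G : Type*) [Group G] : Prop :=
  Subgroup.center G = commutator G ∧ commutator G = frattini G ∧
    Nat.card (Subgroup.center G) = p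

/-- Let `p` be an odd prime and `G` a finite `p`-group with
`|γ₂(G)| = p` and `exp(G) = p`.  Then either `G` is extra-special, or
`G = U × V` (internal direct product) where `U ≤ Z(G)` is elementary abelian
and `V` is extra-special. -/
theorem stmt1 {p : ℕ} [Fact p.Prime] (hodd : Odd p) {G : Type*} [Group G] [Finite G]
    (hG : IsPGroup p G)
    (hcomm : Nat.card (commutator G) = p)
    (hexp : Monoid.exponent G = p) :
    IsExtraspecial p G ∨
      ∃ U V : Subgroup G,
        U ≤ Subgroup.center G ∧ (∀ u ∈ U, u ^ p = 1) ∧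
        IsExtraspecial p V ∧
        U ⊓ V = ⊥ ∧ U ⊔ V = ⊤ := by
  right
  have hxp : ∀ x : G, x ^ p = 1 := fun x => by
    rw [← hexp]; exact Monoid.pow_exponent_eq_one x
  have hKZ : commutator G ≤ Subgroup.center G := normal_le_center_of_card_eq hG hcomm
  -- construction of U : maximal central subgroup intersecting the commutator trivially
  obtain ⟨U, hUS, hUmax⟩ := Set.Finite.exists_maximalFor id
    {U : Subgroup G | U ≤ Subgroup.center G ∧ U ⊓ commutator G = ⊥} (Set.toFinite _)
    ⟨⊥, bot_le, bot_inf_eq _⟩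
  simp only [id] at hUmax
  replace hUmax : ∀ U' ∈ {U : Subgroup G | U ≤ Subgroup.center G ∧ U ⊓ commutator G = ⊥},
      U ≤ U' → U = U' :=
    fun U' h1 h2 => le_antisymm h2 (hUmax h1 h2)
  obtain ⟨hUZ, hUK⟩ := hUS
  haveI hUnormal : U.Normal := normal_of_le_center' hUZ
  have hZUK : U ⊔ commutator G = Subgroup.center G := by
    refine le_antisymm (sup_le hUZ hKZ) ?_
    intro z hzZ
    by_contra hznot
    haveI hzn : (Subgroup.zpowers z).Normal :=
      normal_of_le_center' (Subgroup.zpowers_le.mpr hzZ)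
    have hU' : U ⊔ Subgroup.zpowers z ≤ Subgroup.center G :=
      sup_le hUZ (Subgroup.zpowers_le.mpr hzZ)
    have hU'K : (U ⊔ Subgroup.zpowers z) ⊓ commutator G = ⊥ := by
      rw [eq_bot_iff]
      rintro w ⟨hw1, hw2⟩
      have hw1' : (w : G) ∈ (U : Set G) * (Subgroup.zpowers z : Set G) := by
        rw [← Subgroup.mul_normal U (Subgroup.zpowers z)]
        exact hw1
      obtain ⟨u, hu, c, hc, rfl⟩ := Set.mem_mul.mp hw1'
      obtain ⟨k, rfl⟩ := hc
      by_cases hk : (p : ℤ) ∣ k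
      · obtain ⟨t, rfl⟩ := hk
        have hzk : z ^ ((p : ℤ) * t) = 1 := by
          rw [zpow_mul, zpow_natCast, hxp, one_zpow]
        have huK : u ∈ U ⊓ commutator G := ⟨hu, by simpa [hzk] using hw2⟩
        rw [hUK, Subgroup.mem_bot] at huK
        simp [huK, hzk]
      · exfalso
        apply hznot
        have hzkmem : z ^ k ∈ U ⊔ commutator G := by
          have he : z ^ k = u⁻¹ * (u * z ^ k) := by group
          rw [he]
          exact mul_mem (Subgroup.mem_sup_left (inv_mem hu)) (Subgroup.mem_sup_right hw2)
        exact (Subgroup.zpowers_le.mpr hzkmem) (mem_zpowers_zpow (hxp z) hk)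
    have heq := hUmax (U ⊔ Subgroup.zpowers z) ⟨hU', hU'K⟩ le_sup_left
    apply hznot
    have hzU : z ∈ U := by
      rw [heq]; exact Subgroup.mem_sup_right (Subgroup.mem_zpowers z)
    exact Subgroup.mem_sup_left hzU
  -- construction of V : minimal supplement to U
  obtain ⟨V, hVT, hVmin⟩ := Set.Finite.exists_minimalFor id
    {V : Subgroup G | U ⊔ V = ⊤} (Set.toFinite _) ⟨⊤, sup_top_eq _⟩
  simp only [id] at hVmin
  replace hVmin : ∀ V' ∈ {V : Subgroup G | U ⊔ V = ⊤}, V' ≤ V → V = V' :=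
    fun V' h1 h2 => le_antisymm (hVmin h1 h2) h2
  have hVT' : U ⊔ V = ⊤ := hVT
  have hVU : V ⊔ U = ⊤ := by rw [sup_comm]; exact hVT'
  have hdecomp : ∀ g : G, ∃ v ∈ V, ∃ u ∈ U, v * u = g := by
    intro g
    have hg : g ∈ (V : Set G) * (U : Set G) := by
      rw [← Subgroup.mul_normal V U, hVU]
      trivial
    exact Set.mem_mul.mp hg
  have hVVK : ⁅V, V⁆ = commutator G := by
    refine le_antisymm
      (by rw [_root_.commutator_def]; exact Subgroup.commutator_mono le_top le_top) ?_
    rw [_root_.commutator_def]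
    refine Subgroup.commutator_le.mpr fun g₁ _ g₂ _ => ?_
    obtain ⟨v, hv, u, hu, rfl⟩ := hdecomp g₁
    obtain ⟨v', hv', u', hu', rfl⟩ := hdecomp g₂
    rw [commutatorElement_mul_center v v' u u' (hUZ hu) (hUZ hu')]
    exact Subgroup.commutator_mem_commutator hv hv'
  have hKV : commutator G ≤ V := by
    rw [← hVVK]
    refine Subgroup.commutator_le.mpr fun a ha b hb => ?_
    rw [commutatorElement_def]
    exact mul_mem (mul_mem (mul_mem ha hb) (inv_mem ha)) (inv_mem hb)
  have hVp : IsPGroup p ↥V := hG.to_subgroup V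
  have hVexp : ∀ v : ↥V, v ^ p = 1 := fun v => Subtype.ext (by simpa using hxp (v : G))
  have hfr : frattini ↥V = commutator ↥V := frattini_eq_commutator hVp hVexp
  have hmaptop : Subgroup.map V.subtype ⊤ = V := by
    rw [← MonoidHom.range_eq_map, Subgroup.range_subtype]
  have hmapcomm : Subgroup.map V.subtype (commutator ↥V) = commutator G := by
    rw [_root_.commutator_def, Subgroup.map_commutator, hmaptop, hVVK]
  -- U ⊓ V = ⊥
  have hUV : U ⊓ V = ⊥ := by
    rw [eq_bot_iff]
    rintro x ⟨hxU, hxV⟩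
    have hx' : (⟨x, hxV⟩ : ↥V) ∈ frattini ↥V := by
      by_contra hnot
      obtain ⟨M, hMco, hxM⟩ := not_mem_frattini hnot
      have hlt : M < M ⊔ Subgroup.zpowers (⟨x, hxV⟩ : ↥V) := by
        rcases lt_or_eq_of_le (le_sup_left : M ≤ M ⊔ Subgroup.zpowers (⟨x, hxV⟩ : ↥V)) with h | h
        · exact h
        · exfalso
          apply hxM
          rw [h]
          exact Subgroup.mem_sup_right (Subgroup.mem_zpowers _)
      have htop := hMco.2 _ hlt
      have hmapV : V = Subgroup.map V.subtype M ⊔ Subgroup.zpowers x := by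
        have hc := congrArg (Subgroup.map V.subtype) htop
        rw [Subgroup.map_sup, hmaptop, MonoidHom.map_zpowers] at hc
        exact hc.symm
      have hT : U ⊔ Subgroup.map V.subtype M = ⊤ := by
        have h2 : V ≤ U ⊔ Subgroup.map V.subtype M := by
          refine le_trans (le_of_eq hmapV) (sup_le le_sup_right ?_)
          exact le_trans (Subgroup.zpowers_le.mpr hxU) le_sup_left
        exact top_unique (by rw [← hVT']; exact sup_le le_sup_left h2)
      have hle : Subgroup.map V.subtype M ≤ V :=
        le_trans (Subgroup.map_mono le_top) (le_of_eq hmaptop)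
      have heq := hVmin (Subgroup.map V.subtype M) hT hle
      apply hMco.1
      apply Subgroup.map_injective V.subtype_injective
      rw [hmaptop]
      exact heq.symm
    rw [hfr] at hx'
    have hxK : x ∈ commutator G := by
      rw [← hmapcomm]
      exact ⟨⟨x, hxV⟩, hx', rfl⟩
    have : x ∈ U ⊓ commutator G := ⟨hxU, hxK⟩
    rw [hUK] at this
    exact this
  -- the center of V
  have hZV : Subgroup.center G ⊓ V = commutator G := by
    refine le_antisymm ?_ (le_inf hKZ hKV)
    rintro w ⟨hwZ, hwV⟩
    rw [← hZUK] at hwZ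
    have hw' : w ∈ (U : Set G) * (commutator G : Set G) := by
      rw [← Subgroup.mul_normal U (commutator G)]
      exact hwZ
    obtain ⟨u, hu, c, hc, rfl⟩ := Set.mem_mul.mp hw'
    have huV : u ∈ V := by
      have he : u = u * c * c⁻¹ := by group
      rw [he]
      exact mul_mem hwV (inv_mem (hKV hc))
    have huUV : u ∈ U ⊓ V := ⟨hu, huV⟩
    rw [hUV, Subgroup.mem_bot] at huUV
    rw [huUV, one_mul]
    exact hc
  have hmapcenter : Subgroup.map V.subtype (Subgroup.center ↥V) = commutator G := by
    apply le_antisymm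
    · rintro _ ⟨v, hv, rfl⟩
      simp only [Subgroup.coe_subtype]
      rw [← hZV]
      refine ⟨Subgroup.mem_center_iff.mpr fun g => ?_, v.2⟩
      obtain ⟨v', hv', u, hu, rfl⟩ := hdecomp g
      have h1 : (⟨v', hv'⟩ : ↥V) * v = v * ⟨v', hv'⟩ := Subgroup.mem_center_iff.mp hv ⟨v', hv'⟩
      have h1' : v' * (v : G) = (v : G) * v' := congrArg Subtype.val h1
      have hu' := Subgroup.mem_center_iff.mp (hUZ hu)
      calc v' * u * (v : G) = v' * (u * (v : G)) := by rw [mul_assoc]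
        _ = v' * ((v : G) * u) := by rw [← hu' (v : G)]
        _ = v' * (v : G) * u := by rw [← mul_assoc]
        _ = (v : G) * v' * u := by rw [h1']
        _ = (v : G) * (v' * u) := by rw [mul_assoc]
    · intro c hc
      have hcV : c ∈ V := hKV hc
      refine ⟨⟨c, hcV⟩, ?_, rfl⟩
      refine Subgroup.mem_center_iff.mpr fun w => ?_
      exact Subtype.ext (Subgroup.mem_center_iff.mp (hKZ hc) (w : G))
  have hcard : Nat.card (Subgroup.center ↥V) = p := by
    rw [← hcomm, ← hmapcenter]
    exact Nat.card_congr (Subgroup.equivMapOfInjective _ _ V.subtype_injective).toEquiv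
  have hcc : Subgroup.center ↥V = commutator ↥V := by
    apply Subgroup.map_injective V.subtype_injective
    rw [hmapcenter, hmapcomm]
  exact ⟨U, V, hUZ, fun u _ => hxp u, ⟨hcc, hfr.symm, hcard⟩, hUV, hVT'⟩
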